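/- The map α ↦ α̂ on pseudo-compositions, defined by α̂ = (α₁, (α₂,...,α_k)^), where ^ is the type A peak-composition collapsing map on the composition (α₂,...,α_k), is a surjection from pseudo-compositions of n onto type B peak pseudo-compositions of n. -/

import Mathlib

/-- The type A collapsing map on compositions: each maximal run of consecutive 1's
is merged into the next part to the right (a trailing run of `r` ones becomes `r`). -/
def collapse : List ℕ → List ℕ
  | [] => []
  | 1 :: rest =>
    match collapse rest with
    | [] => [1]
    | b :: t => (b + 1) :: t
  | a :: rest => a :: collapse rest

/-- The type B collapsing map on pseudo-compositions: the first part is kept and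
the collapsing map is applied to the remaining parts. -/
def collapseB : List ℕ → List ℕ
  | [] => []
  | a :: t => a :: collapse t

/-- A pseudo-composition of `n`: first part `≥ 0`, remaining parts positive, sum `n`. -/
def IsPseudoComp (n : ℕ) (l : List ℕ) : Prop :=
  (∀ x ∈ l.tail, 0 < x) ∧ l.sum = n

/-- A type B peak pseudo-composition of `n`: a pseudo-composition whose middle
parts all exceed 1. -/
def IsPeakPseudoCompB (n : ℕ) (l : List ℕ) : Prop :=
  IsPseudoComp n l ∧ ∀ i, 0 < i → i + 1 < l.length → 1 < l.getD i 0

lemma collapse_one (rest : List ℕ) :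
    collapse (1 :: rest) = match collapse rest with
      | [] => [1]
      | b :: t => (b + 1) :: t := rfl

lemma collapse_cons (a : ℕ) (rest : List ℕ) (h : a ≠ 1) :
    collapse (a :: rest) = a :: collapse rest := by
  match a, h with
  | 0, _ => rfl
  | (n+2), _ => rfl

lemma collapse_spec (l : List ℕ) (h : ∀ x ∈ l, 0 < x) :
    (∀ x ∈ collapse l, 0 < x) ∧
    (∀ i, i + 1 < (collapse l).length → 1 < (collapse l).getD i 0) ∧
    (collapse l).sum = l.sum := by
  induction l with
  | nil => simp [collapse]
  | cons a rest ih =>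
    have hrest : ∀ x ∈ rest, 0 < x := fun x hx => h x (List.mem_cons_of_mem _ hx)
    obtain ⟨ih1, ih2, ih3⟩ := ih hrest
    by_cases ha : a = 1
    · subst ha
      rw [collapse_one]
      cases hc : collapse rest with
      | nil =>
        simp only [hc] at ih3
        simp [← ih3]
      | cons b t =>
        rw [hc] at ih1 ih2 ih3
        refine ⟨?_, ?_, ?_⟩
        · intro x hx
          rcases List.mem_cons.mp hx with rfl | hx
          · omega
          · exact ih1 x (List.mem_cons_of_mem _ hx)
        · intro i hi
          cases i with
          | zero =>
            have hb : 0 < b := ih1 b List.mem_cons_self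
            simpa using hb
          | succ j =>
            have := ih2 (j+1) (by simpa using hi)
            simpa using this
        · simp at ih3 ⊢; omega
    · rw [collapse_cons a rest ha]
      have ha2 : 1 < a := by
        have := h a List.mem_cons_self; omega
      refine ⟨?_, ?_, ?_⟩
      · intro x hx
        rcases List.mem_cons.mp hx with rfl | hx
        · omega
        · exact ih1 x hx
      · intro i hi
        cases i with
        | zero => simpa using ha2
        | succ j =>
          have := ih2 j (by simpa using hi)
          simpa using this
      · simp [ih3]

lemma collapse_eq_self (l : List ℕ) (h : ∀ i, i + 1 < l.length → 1 < l.getD i 0) :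
    collapse l = l := by
  induction l with
  | nil => rfl
  | cons a rest ih =>
    cases rest with
    | nil =>
      by_cases ha : a = 1
      · subst ha; rfl
      · rw [collapse_cons a [] ha]; rfl
    | cons b rs =>
      have ha : 1 < a := by
        have := h 0 (by simp)
        simpa using this
      rw [collapse_cons a _ (by omega)]
      congr 1
      exact ih (fun i hi => by
        have := h (i+1) (by simpa using hi)
        simpa using this)

/-- The map `α ↦ α̂` is a surjection from pseudo-compositions of `n` onto type B
peak pseudo-compositions of `n`. -/
theorem stmt16 (n : ℕ) :
    (∀ l : List ℕ, IsPseudoComp n l → IsPeakPseudoCompB n (collapseB l)) ∧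
    (∀ p : List ℕ, IsPeakPseudoCompB n p →
      ∃ l : List ℕ, IsPseudoComp n l ∧ collapseB l = p) := by
  constructor
  · rintro l ⟨hpos, hsum⟩
    cases l with
    | nil => exact ⟨⟨by simp [collapseB], by simpa [collapseB] using hsum⟩, by simp [collapseB]⟩
    | cons a t =>
      obtain ⟨c1, c2, c3⟩ := collapse_spec t (by simpa using hpos)
      refine ⟨⟨?_, ?_⟩, ?_⟩
      · simpa [collapseB] using c1
      · simp only [collapseB, List.sum_cons, c3]
        simpa using hsum
      · intro i hi hil
        cases i with
        | zero => omega
        | succ j =>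
          simp only [collapseB, List.length_cons] at hil
          have := c2 j (by omega)
          simpa [collapseB] using this
  · rintro p ⟨⟨hpos, hsum⟩, hmid⟩
    refine ⟨p, ⟨hpos, hsum⟩, ?_⟩
    cases p with
    | nil => rfl
    | cons a t =>
      simp only [collapseB]
      congr 1
      exact collapse_eq_self t (fun i hi => by
        have := hmid (i+1) (by omega) (by simpa using hi)
        simpa using this)
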